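/- Let ρ₁, ρ₂ be density matrices on ℂ^{n_A} ⊗ ℂ^{n_B} and let U be a unitary n_B×n_B matrix. If for every rank-one projection M on ℂ^{n_A} one has Tr_A((M ⊗ I_B) ρ₁) = U · Tr_A((M ⊗ I_B) ρ₂) · U†, then ρ₁ = (I_A ⊗ U) ρ₂ (I_A ⊗ U)†. (This is the content of the paper's Theorem 1: two states whose post-measurement conditional states on B always differ by the same local unitary on B are themselves related by that local unitary on B.) -/

import Mathlib

open Matrix
open scoped Matrix Kronecker ComplexOrder

/-- A density matrix: positive semidefinite with trace 1. -/
def IsDensityMatrix {n : Type*} [Fintype n] (ρ : Matrix n n ℂ) : Prop :=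
  ρ.PosSemidef ∧ ρ.trace = 1

/-- A rank-one projection on ℂⁿ: the outer product ψψ† of a unit vector ψ. -/
def IsRankOneProj {n : ℕ} (M : Matrix (Fin n) (Fin n) ℂ) : Prop :=
  ∃ ψ : Fin n → ℂ, (∑ i, star (ψ i) * ψ i) = 1 ∧ M = Matrix.vecMulVec ψ (star ψ)

/-- Partial trace over the first (A) factor. -/
noncomputable def ptraceA {nA nB : ℕ}
    (X : Matrix (Fin nA × Fin nB) (Fin nA × Fin nB) ℂ) :
    Matrix (Fin nB) (Fin nB) ℂ :=
  Matrix.of fun j j' => ∑ i, X (i, j) (i, j')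

lemma sum_ite_pull' {α : Type*} [Fintype α] (p : Prop) [Decidable p] (f : α → ℂ) :
    ∑ b, (if p then f b else 0) = if p then ∑ b, f b else 0 := by split <;> simp

lemma ptraceA_mul_kron {nA nB : ℕ} (M : Matrix (Fin nA) (Fin nA) ℂ)
    (X : Matrix (Fin nA × Fin nB) (Fin nA × Fin nB) ℂ) (j j' : Fin nB) :
    ptraceA ((M ⊗ₖ (1 : Matrix (Fin nB) (Fin nB) ℂ)) * X) j j'
      = ∑ i, ∑ a, M i a * X (a, j) (i, j') := by
  simp [ptraceA, Matrix.mul_apply, Fintype.sum_prod_type, Matrix.one_apply,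
    ite_mul, mul_ite, Finset.sum_ite_eq, Finset.sum_ite_eq']

lemma ptraceA_conj {nA nB : ℕ} (U : Matrix (Fin nB) (Fin nB) ℂ)
    (Y : Matrix (Fin nA × Fin nB) (Fin nA × Fin nB) ℂ) :
    ptraceA (((1 : Matrix (Fin nA) (Fin nA) ℂ) ⊗ₖ U) * Y * ((1 : Matrix (Fin nA) (Fin nA) ℂ) ⊗ₖ U)ᴴ)
      = U * ptraceA Y * Uᴴ := by
  ext j j'
  simp only [ptraceA, Matrix.mul_apply, Matrix.of_apply, Fintype.sum_prod_type,
    Matrix.kroneckerMap_apply, Matrix.conjTranspose_apply, Matrix.one_apply,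
    apply_ite star, star_one, star_zero, ite_mul, mul_ite, zero_mul, mul_zero, one_mul, mul_one,
    sum_ite_pull', Finset.sum_ite_eq, Finset.sum_ite_eq', Finset.mem_univ, if_true]
  rw [Finset.sum_comm]
  refine Finset.sum_congr rfl fun b _ => ?_
  simp only [Finset.sum_mul, Finset.mul_sum]
  exact Finset.sum_comm

lemma form_zero_of_unit {n : ℕ} (B : Matrix (Fin n) (Fin n) ℂ)
    (hB : ∀ ψ : Fin n → ℂ, (∑ i, star (ψ i) * ψ i) = 1 →
      ∑ a, ∑ i, star (ψ a) * ψ i * B a i = 0) :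
    B = 0 := by
  have hall : ∀ ψ : Fin n → ℂ, ∑ a, ∑ i, star (ψ a) * ψ i * B a i = 0 := by
    intro ψ
    by_cases hψ : ψ = 0
    · subst hψ; simp
    · set s : ℝ := ∑ i, Complex.normSq (ψ i) with hs
      have hspos : 0 < s := by
        obtain ⟨i, hi⟩ := Function.ne_iff.mp hψ
        exact Finset.sum_pos' (fun j _ => Complex.normSq_nonneg _)
          ⟨i, Finset.mem_univ i, by simpa using Complex.normSq_pos.mpr hi⟩
      set r : ℝ := Real.sqrt s with hr
      have hrpos : 0 < r := Real.sqrt_pos.mpr hspos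
      have hrne : (r : ℂ) ≠ 0 := by exact_mod_cast hrpos.ne'
      have hsum : (∑ i, (starRingEnd ℂ) (ψ i) * ψ i) = (s : ℂ) := by
        rw [hs]; push_cast
        exact Finset.sum_congr rfl fun i _ => (Complex.normSq_eq_conj_mul_self).symm
      have hunit : (∑ i, star ((fun i => (r : ℂ)⁻¹ * ψ i) i) * ((fun i => (r : ℂ)⁻¹ * ψ i) i)) = 1 := by
        simp only [star_mul', star_inv₀]
        have : (starRingEnd ℂ) (r : ℂ) = (r : ℂ) := Complex.conj_ofReal r
        simp only [RCLike.star_def, this]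
        simp only [show ∀ a i : ℂ, (r:ℂ)⁻¹ * a * ((r:ℂ)⁻¹ * i) = (r:ℂ)⁻¹ * (r:ℂ)⁻¹ * (a * i) from fun a i => by ring]
        rw [← Finset.mul_sum, hsum]
        norm_cast
        rw [hr, ← Real.sqrt_inv, Real.mul_self_sqrt (inv_nonneg.mpr hspos.le)]
        exact inv_mul_cancel₀ hspos.ne'
      have h0 := hB _ hunit
      simp only [star_mul', star_inv₀, RCLike.star_def, Complex.conj_ofReal] at h0
      have hfac : ∀ a i : Fin n,
          (r:ℂ)⁻¹ * (starRingEnd ℂ) (ψ a) * ((r:ℂ)⁻¹ * ψ i) * B a i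
            = (r:ℂ)⁻¹ * ((r:ℂ)⁻¹ * (star (ψ a) * ψ i * B a i)) := fun a i => by
        simp [RCLike.star_def]; ring
      simp only [hfac, ← Finset.mul_sum] at h0
      rcases mul_eq_zero.mp h0 with h | h
      · exact absurd (inv_eq_zero.mp h) hrne
      rcases mul_eq_zero.mp h with h | h
      · exact absurd (inv_eq_zero.mp h) hrne
      · exact h
  have : Matrix.toEuclideanLin B = 0 := by
    rw [← inner_map_self_eq_zero]
    intro x
    have hx := hall (fun i => x i)
    rw [show (0:ℂ) = star (0:ℂ) by simp, ← hx]
    simp only [PiLp.inner_apply, RCLike.inner_apply, Matrix.toEuclideanLin_apply,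
      WithLp.ofLp_toLp, Matrix.mulVec, dotProduct,
      star_sum, star_mul', map_sum, _root_.map_mul, Finset.sum_mul, Finset.mul_sum, RCLike.star_def, Complex.conj_conj]
    refine Finset.sum_congr rfl fun a _ => Finset.sum_congr rfl fun i _ => by ring
  have := (Matrix.toEuclideanLin (𝕜 := ℂ)).map_eq_zero_iff.mp this
  exact this

theorem stmt_2 {nA nB : ℕ}
    (ρ₁ ρ₂ : Matrix (Fin nA × Fin nB) (Fin nA × Fin nB) ℂ)
    (h₁ : IsDensityMatrix ρ₁) (h₂ : IsDensityMatrix ρ₂)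
    (U : Matrix (Fin nB) (Fin nB) ℂ)
    (hU : U ∈ Matrix.unitaryGroup (Fin nB) ℂ)
    (h : ∀ M : Matrix (Fin nA) (Fin nA) ℂ, IsRankOneProj M →
      ptraceA ((M ⊗ₖ (1 : Matrix (Fin nB) (Fin nB) ℂ)) * ρ₁) =
      U * ptraceA ((M ⊗ₖ (1 : Matrix (Fin nB) (Fin nB) ℂ)) * ρ₂) * Uᴴ) :
    ρ₁ = ((1 : Matrix (Fin nA) (Fin nA) ℂ) ⊗ₖ U) * ρ₂ *
      ((1 : Matrix (Fin nA) (Fin nA) ℂ) ⊗ₖ U)ᴴ := by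
  set σ : Matrix (Fin nA × Fin nB) (Fin nA × Fin nB) ℂ :=
    ((1 : Matrix (Fin nA) (Fin nA) ℂ) ⊗ₖ U) * ρ₂ * ((1 : Matrix (Fin nA) (Fin nA) ℂ) ⊗ₖ U)ᴴ
    with hσ
  have h' : ∀ M : Matrix (Fin nA) (Fin nA) ℂ, IsRankOneProj M →
      ptraceA ((M ⊗ₖ (1 : Matrix (Fin nB) (Fin nB) ℂ)) * ρ₁) =
      ptraceA ((M ⊗ₖ (1 : Matrix (Fin nB) (Fin nB) ℂ)) * σ) := by
    intro M hM
    rw [h M hM, hσ]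
    rw [show (M ⊗ₖ (1 : Matrix (Fin nB) (Fin nB) ℂ)) *
        (((1 : Matrix (Fin nA) (Fin nA) ℂ) ⊗ₖ U) * ρ₂ * ((1 : Matrix (Fin nA) (Fin nA) ℂ) ⊗ₖ U)ᴴ)
        = ((1 : Matrix (Fin nA) (Fin nA) ℂ) ⊗ₖ U) *
          ((M ⊗ₖ (1 : Matrix (Fin nB) (Fin nB) ℂ)) * ρ₂) * ((1 : Matrix (Fin nA) (Fin nA) ℂ) ⊗ₖ U)ᴴ by
      rw [← Matrix.mul_assoc, ← Matrix.mul_assoc, ← Matrix.mul_assoc,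
        ← Matrix.mul_kronecker_mul, ← Matrix.mul_kronecker_mul,
        Matrix.mul_one, Matrix.one_mul, Matrix.mul_one, Matrix.one_mul]]
    rw [ptraceA_conj]
  have key : ∀ (j j' : Fin nB) (ψ : Fin nA → ℂ), (∑ i, star (ψ i) * ψ i) = 1 →
      ∑ a, ∑ i, star (ψ a) * ψ i *
        (Matrix.of (fun a i => ρ₁ (a, j) (i, j') - σ (a, j) (i, j')) a i) = 0 := by
    intro j j' ψ hψ
    have h2 := congrFun (congrFun (h' _ ⟨ψ, hψ, rfl⟩) j) j'
    rw [ptraceA_mul_kron, ptraceA_mul_kron] at h2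
    simp only [Matrix.vecMulVec_apply, Pi.star_apply] at h2
    rw [Finset.sum_comm]
    simp only [Matrix.of_apply, mul_sub, Finset.sum_sub_distrib]
    rw [sub_eq_zero]
    have e : ∀ X : Matrix (Fin nA × Fin nB) (Fin nA × Fin nB) ℂ,
        ∑ i, ∑ a, star (ψ a) * ψ i * X (a, j) (i, j')
          = ∑ i, ∑ a, ψ i * star (ψ a) * X (a, j) (i, j') := fun X =>
      Finset.sum_congr rfl fun i _ => Finset.sum_congr rfl fun a _ => by ring
    rw [e, e]; exact h2
  have hzero : ∀ j j' : Fin nB,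
      (Matrix.of (fun a i => ρ₁ (a, j) (i, j') - σ (a, j) (i, j'))
        : Matrix (Fin nA) (Fin nA) ℂ) = 0 :=
    fun j j' => form_zero_of_unit _ (fun ψ hψ => key j j' ψ hψ)
  ext ⟨a, j⟩ ⟨i, j'⟩
  have := congrFun (congrFun (hzero j j') a) i
  simp only [Matrix.of_apply, Matrix.zero_apply] at this
  exact sub_eq_zero.mp this
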